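/- Let U, U* ∈ ℝ^{n×r} and let R be an r×r orthogonal matrix such that (U*·R)ᵀ·U is symmetric and positive semidefinite. Then ‖U·Uᵀ − U*·U*ᵀ‖_F² ≥ 2·(√2 − 1)·σ_r(U*·U*ᵀ)·‖U − U*·R‖_F², where σ_r(U*·U*ᵀ) denotes the r-th largest eigenvalue of the positive semidefinite matrix U*·U*ᵀ. -/

import Mathlib

open Matrix MeasureTheory BigOperators

/-- Matrix inner product `⟨A, X⟩ = trace(Aᵀ X)`. -/
noncomputable def mip {n : ℕ} (A X : Matrix (Fin n) (Fin n) ℝ) : ℝ :=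
  (Aᵀ * X).trace

/-- Frobenius norm of a real matrix. -/
noncomputable def frob {n₁ n₂ : ℕ} (M : Matrix (Fin n₁) (Fin n₂) ℝ) : ℝ :=
  Real.sqrt (∑ i, ∑ j, (M i j) ^ 2)

/-- `(k, δ)`-restricted isometry property of the measurement operator `A`. -/
def RIP {n m : ℕ} (A : Fin m → Matrix (Fin n) (Fin n) ℝ) (k : ℕ) (δ : ℝ) : Prop :=
  ∀ X : Matrix (Fin n) (Fin n) ℝ, X.rank ≤ k →
    (1 - δ) * frob X ^ 2 ≤ (1 / (m : ℝ)) * ∑ i, mip (A i) X ^ 2 ∧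
    (1 / (m : ℝ)) * ∑ i, mip (A i) X ^ 2 ≤ (1 + δ) * frob X ^ 2

/-- Objective `f(U) = ∑ i, (⟨A i, U Uᵀ⟩ - y i)²`. -/
noncomputable def fobj {n m r : ℕ} (A : Fin m → Matrix (Fin n) (Fin n) ℝ) (y : Fin m → ℝ)
    (U : Matrix (Fin n) (Fin r) ℝ) : ℝ :=
  ∑ i, (mip (A i) (U * Uᵀ) - y i) ^ 2

open scoped Classical in
/-- The `k`-th largest eigenvalue of a (Hermitian) real matrix; junk value `0` otherwise. -/
noncomputable def nthLargestEig {n : ℕ} (M : Matrix (Fin n) (Fin n) ℝ) (k : ℕ) : ℝ :=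
  if h : M.IsHermitian ∧ 0 < k ∧ k ≤ n then
    (h.1.eigenvalues ∘ Tuple.sort h.1.eigenvalues)
      ⟨n - k, Nat.sub_lt (lt_of_lt_of_le h.2.1 h.2.2) h.2.1⟩
  else 0

/-! ### Auxiliary lemmas -/

lemma frob_sq {n₁ n₂ : ℕ} (M : Matrix (Fin n₁) (Fin n₂) ℝ) :
    frob M ^ 2 = ∑ i, ∑ j, (M i j) ^ 2 := by
  rw [frob, Real.sq_sqrt]; positivity

lemma frob_sq_eq_trace {n₁ n₂ : ℕ} (M : Matrix (Fin n₁) (Fin n₂) ℝ) :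
    frob M ^ 2 = (Mᵀ * M).trace := by
  rw [frob_sq, Matrix.trace]
  simp only [Matrix.diag, Matrix.mul_apply, Matrix.transpose_apply]
  rw [Finset.sum_comm]
  congr 1; ext i; congr 1; ext j; ring

lemma realHerm {r : ℕ} {X : Matrix (Fin r) (Fin r) ℝ} (h : Xᵀ = X) : X.IsHermitian := by
  rwa [Matrix.IsHermitian, Matrix.conjTranspose_eq_transpose_of_trivial]

lemma scalar_key (σ b p t : ℝ) (hσ : 0 ≤ σ) (hb : σ ≤ b) (hp : p ≤ b) (ht : 0 ≤ t) :
    2 * (Real.sqrt 2 - 1) * σ * (b - p) ≤ b ^ 2 + p ^ 2 + 2 * t ^ 2 - 4 * t * p := by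
  have h2 : Real.sqrt 2 ^ 2 = 2 := Real.sq_sqrt (by norm_num)
  have h1 : (1 : ℝ) ≤ Real.sqrt 2 := by nlinarith [Real.sqrt_nonneg 2]
  have h15 : Real.sqrt 2 ≤ 3 / 2 := by nlinarith [Real.sqrt_nonneg 2]
  rcases le_or_gt p 0 with hp0 | hp0
  · nlinarith [sq_nonneg (p + (Real.sqrt 2 - 1) * σ), mul_nonneg ht (neg_nonneg.2 hp0),
      mul_nonneg hσ (sub_nonneg.2 hb), mul_nonneg (hσ.trans hb) (sub_nonneg.2 hb)]
  · nlinarith [sq_nonneg (t - p), mul_nonneg (sub_nonneg.2 hp)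
      (show (0:ℝ) ≤ b + p - 2 * (Real.sqrt 2 - 1) * σ by nlinarith)]

lemma psd_diag {r : ℕ} {X : Matrix (Fin r) (Fin r) ℝ} (hX : X.PosSemidef) (i : Fin r) :
    0 ≤ X i i := by
  exact hX.diag_nonneg

lemma sq_trace_ge {r : ℕ} {X : Matrix (Fin r) (Fin r) ℝ} (h : Xᵀ = X) :
    ∑ i, (X i i) ^ 2 ≤ (X * X).trace := by
  have h' : (X * X).trace = ∑ i, ∑ j, (X i j) ^ 2 := by
    rw [Matrix.trace]
    simp only [Matrix.diag, Matrix.mul_apply]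
    congr 1; ext i; congr 1; ext j
    rw [sq]
    congr 1
    exact (congrFun (congrFun h j) i).symm
  rw [h']
  apply Finset.sum_le_sum
  intro i _
  exact Finset.single_le_sum (fun j _ => sq_nonneg (X i j)) (Finset.mem_univ i)

lemma eigA {n r : ℕ} (hr : 0 < r) (hrn : r ≤ n) (A : Matrix (Fin n) (Fin r) ℝ)
    (hσ : 0 < nthLargestEig (A * Aᵀ) r) :
    (Aᵀ * A - nthLargestEig (A * Aᵀ) r • (1 : Matrix (Fin r) (Fin r) ℝ)).PosSemidef := by
  set σ := nthLargestEig (A * Aᵀ) r with hσdef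
  have hM : (A * Aᵀ).IsHermitian := realHerm (by rw [Matrix.transpose_mul, Matrix.transpose_transpose])
  have hcond : (A * Aᵀ).IsHermitian ∧ 0 < r ∧ r ≤ n := ⟨hM, hr, hrn⟩
  have hnr : n - r < n := Nat.sub_lt (lt_of_lt_of_le hr hrn) hr
  have hσeq : σ = hM.eigenvalues (Tuple.sort hM.eigenvalues ⟨n - r, hnr⟩) := by
    rw [hσdef, nthLargestEig, dif_pos hcond]; rfl
  set π := Tuple.sort hM.eigenvalues with hπ
  have hembi : ∀ i : Fin r, n - r + i.1 < n := by intro i; omega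
  set emb : Fin r → Fin n := fun i => π ⟨n - r + i.1, hembi i⟩ with hemb
  have hembinj : Function.Injective emb := by
    intro a b hab
    have h' : (⟨n - r + a.1, hembi a⟩ : Fin n) = ⟨n - r + b.1, hembi b⟩ := π.injective hab
    have h'' : n - r + a.1 = n - r + b.1 := congrArg Fin.val h'
    exact Fin.ext (by omega)
  set lam : Fin r → ℝ := fun i => hM.eigenvalues (emb i) with hlam
  have hlamge : ∀ i, σ ≤ lam i := by
    intro i
    rw [hσeq]
    exact Tuple.monotone_sort hM.eigenvalues (by simp [Fin.le_def])
  set W : Matrix (Fin n) (Fin n) ℝ := (hM.eigenvectorUnitary : Matrix (Fin n) (Fin n) ℝ) with hW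
  have hW1 : star W * W = 1 := by
    rw [hW]; exact Matrix.mem_unitaryGroup_iff'.mp hM.eigenvectorUnitary.2
  have hMW : (A * Aᵀ) * W = W * Matrix.diagonal hM.eigenvalues := by
    conv_lhs => rw [hM.spectral_theorem, Unitary.conjStarAlgAut_apply]
    rw [Matrix.mul_assoc, hW1, Matrix.mul_one]
    simp [RCLike.ofReal_real_eq_id, hW]
  set K : Matrix (Fin n) (Fin r) ℝ := W.submatrix id emb with hK
  have hKK : Kᵀ * K = 1 := by
    ext a b
    have h1 := congrFun (congrFun hW1 (emb a)) (emb b)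
    simp only [Matrix.mul_apply, Matrix.star_apply, star_trivial] at h1
    simp only [Matrix.mul_apply, Matrix.transpose_apply, hK, Matrix.submatrix_apply, id_eq]
    rw [h1, Matrix.one_apply, Matrix.one_apply]
    simp [hembinj.eq_iff]
  have hMK : (A * Aᵀ) * K = K * Matrix.diagonal lam := by
    have h2 : (A * Aᵀ) * K = ((A * Aᵀ) * W).submatrix id emb := by
      ext j i; simp [Matrix.mul_apply, hK, Matrix.submatrix_apply]
    rw [h2, hMW]
    ext j i
    simp [Matrix.mul_diagonal, hK, Matrix.submatrix_apply, hlam]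
  have hKid : ∀ y : Fin r → ℝ, Kᵀ *ᵥ (K *ᵥ y) = y := by
    intro y; rw [Matrix.mulVec_mulVec, hKK, Matrix.one_mulVec]
  have hinj : Function.Injective (Aᵀ * K).mulVecLin := by
    rw [injective_iff_map_eq_zero]
    intro c hc
    simp only [Matrix.mulVecLin_apply] at hc
    have h0 : (K * Matrix.diagonal lam) *ᵥ c = 0 := by
      rw [← hMK]
      have h3 : (A * Aᵀ * K) *ᵥ c = A *ᵥ ((Aᵀ * K) *ᵥ c) := by
        rw [Matrix.mulVec_mulVec, Matrix.mul_assoc]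
      rw [h3, hc, Matrix.mulVec_zero]
    have h1 : Matrix.diagonal lam *ᵥ c = 0 := by
      have h4 := congrArg (fun v => Kᵀ *ᵥ v) h0
      simpa [← Matrix.mulVec_mulVec, hKid, Matrix.mulVec_zero] using h4
    funext i
    have h5 := congrFun h1 i
    simp only [Matrix.mulVec_diagonal, Pi.zero_apply] at h5
    have hl : 0 < lam i := lt_of_lt_of_le hσ (hlamge i)
    exact by simpa [hl.ne'] using h5
  have hsurj : Function.Surjective (Aᵀ * K).mulVecLin :=
    (LinearMap.injective_iff_surjective).mp hinj
  refine Matrix.PosSemidef.of_dotProduct_mulVec_nonneg ?_ ?_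
  · apply realHerm
    rw [Matrix.transpose_sub, Matrix.transpose_mul, Matrix.transpose_transpose,
      Matrix.transpose_smul, Matrix.transpose_one]
  · intro x
    obtain ⟨c, hc⟩ := hsurj x
    simp only [Matrix.mulVecLin_apply] at hc
    set d : Fin r → ℝ := fun i => lam i * c i with hd
    have hdv : Matrix.diagonal lam *ᵥ c = d := by
      funext i; simp [Matrix.mulVec_diagonal, hd]
    have hw : Aᵀ *ᵥ (K *ᵥ c) = x := by rw [Matrix.mulVec_mulVec, hc]
    have hAx : A *ᵥ x = K *ᵥ d := by
      rw [← hw, Matrix.mulVec_mulVec, Matrix.mulVec_mulVec, hMK, ← Matrix.mulVec_mulVec, hdv]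
    have hxx : x ⬝ᵥ x = c ⬝ᵥ d := by
      calc x ⬝ᵥ x = (Aᵀ *ᵥ (K *ᵥ c)) ⬝ᵥ x := by rw [hw]
        _ = ((K *ᵥ c) ᵥ* A) ⬝ᵥ x := by rw [Matrix.mulVec_transpose]
        _ = (K *ᵥ c) ⬝ᵥ (A *ᵥ x) := (Matrix.dotProduct_mulVec _ _ _).symm
        _ = (K *ᵥ c) ⬝ᵥ (K *ᵥ d) := by rw [hAx]
        _ = ((K *ᵥ c) ᵥ* K) ⬝ᵥ d := Matrix.dotProduct_mulVec _ _ _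
        _ = (Kᵀ *ᵥ (K *ᵥ c)) ⬝ᵥ d := by rw [Matrix.mulVec_transpose]
        _ = c ⬝ᵥ d := by rw [hKid]
    have hAxAx : (A *ᵥ x) ⬝ᵥ (A *ᵥ x) = d ⬝ᵥ d := by
      calc (A *ᵥ x) ⬝ᵥ (A *ᵥ x) = (K *ᵥ d) ⬝ᵥ (K *ᵥ d) := by rw [hAx]
        _ = ((K *ᵥ d) ᵥ* K) ⬝ᵥ d := Matrix.dotProduct_mulVec _ _ _
        _ = (Kᵀ *ᵥ (K *ᵥ d)) ⬝ᵥ d := by rw [Matrix.mulVec_transpose]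
        _ = d ⬝ᵥ d := by rw [hKid]
    have hxAAx : x ⬝ᵥ ((Aᵀ * A) *ᵥ x) = (A *ᵥ x) ⬝ᵥ (A *ᵥ x) := by
      calc x ⬝ᵥ ((Aᵀ * A) *ᵥ x) = x ⬝ᵥ (Aᵀ *ᵥ (A *ᵥ x)) := by rw [Matrix.mulVec_mulVec]
        _ = (x ᵥ* Aᵀ) ⬝ᵥ (A *ᵥ x) := Matrix.dotProduct_mulVec _ _ _
        _ = (A *ᵥ x) ⬝ᵥ (A *ᵥ x) := by rw [Matrix.vecMul_transpose]
    have key : σ * (x ⬝ᵥ x) ≤ x ⬝ᵥ ((Aᵀ * A) *ᵥ x) := by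
      rw [hxAAx, hAxAx, hxx, dotProduct, dotProduct, Finset.mul_sum]
      apply Finset.sum_le_sum
      intro i _
      have h1 : σ ≤ lam i := hlamge i
      have h2 : 0 ≤ lam i := le_of_lt (lt_of_lt_of_le hσ h1)
      simp only [hd]
      nlinarith [sq_nonneg (c i)]
    have hsplit : star x ⬝ᵥ ((Aᵀ * A - σ • 1) *ᵥ x) = x ⬝ᵥ ((Aᵀ * A) *ᵥ x) - σ * (x ⬝ᵥ x) := by
      simp [Matrix.sub_mulVec, Matrix.smul_mulVec, Matrix.one_mulVec, dotProduct_sub,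
        dotProduct_smul, smul_eq_mul, star_trivial]
    rw [hsplit]
    linarith

lemma traceId {n r : ℕ} (U Q : Matrix (Fin n) (Fin r) ℝ)
    (hBA : Uᵀ * Q = Qᵀ * U) :
    frob (U * Uᵀ - Q * Qᵀ) ^ 2 =
      (((Qᵀ * U + Qᵀ * U - Uᵀ * U) * (Qᵀ * U + Qᵀ * U - Uᵀ * U)).trace
        + ((Qᵀ * Q) * (Qᵀ * Q)).trace
        + 2 * ((Qᵀ * U) * (Qᵀ * U)).trace
        - 4 * ((Qᵀ * U) * (Qᵀ * U + Qᵀ * U - Uᵀ * U)).trace) := by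
  rw [frob_sq_eq_trace]
  have hMt : (U * Uᵀ - Q * Qᵀ)ᵀ = U * Uᵀ - Q * Qᵀ := by
    simp [Matrix.transpose_sub, Matrix.transpose_mul]
  rw [hMt]
  have e1 : (U * Uᵀ * (U * Uᵀ)).trace = ((Uᵀ * U) * (Uᵀ * U)).trace := by
    rw [Matrix.mul_assoc, Matrix.trace_mul_comm]; simp only [Matrix.mul_assoc]
  have e2 : (U * Uᵀ * (Q * Qᵀ)).trace = ((Qᵀ * U) * (Qᵀ * U)).trace := by
    rw [Matrix.mul_assoc, Matrix.trace_mul_comm]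
    conv_rhs => rw [show Qᵀ * U = Uᵀ * Q from hBA.symm]
    simp only [Matrix.mul_assoc]
    rw [hBA]
  have e3 : (Q * Qᵀ * (U * Uᵀ)).trace = ((Qᵀ * U) * (Qᵀ * U)).trace := by
    rw [Matrix.trace_mul_comm]; exact e2
  have e4 : (Q * Qᵀ * (Q * Qᵀ)).trace = ((Qᵀ * Q) * (Qᵀ * Q)).trace := by
    rw [Matrix.mul_assoc, Matrix.trace_mul_comm]; simp only [Matrix.mul_assoc]
  have e5 : ((Qᵀ * U) * (Uᵀ * U)).trace = ((Uᵀ * U) * (Qᵀ * U)).trace :=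
    Matrix.trace_mul_comm _ _
  rw [Matrix.sub_mul, Matrix.mul_sub, Matrix.mul_sub, Matrix.trace_sub, Matrix.trace_sub,
    Matrix.trace_sub, e1, e2, e3, e4]
  simp only [Matrix.sub_mul, Matrix.mul_sub, Matrix.add_mul, Matrix.mul_add,
    Matrix.trace_sub, Matrix.trace_add]
  rw [e5]
  ring

set_option maxHeartbeats 1000000 in
/-- Matrix-space distance dominates factor-space distance, scaled by `σ_r(U* U*ᵀ)`,
for the optimal orthogonal alignment `R`. -/
theorem matrix_dist_dominates_factor_dist {n r : ℕ} (hn : 0 < n) (hr : 0 < r)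
    (U Ustar : Matrix (Fin n) (Fin r) ℝ)
    (R : Matrix (Fin r) (Fin r) ℝ) (hR : Rᵀ * R = 1)
    (hsym : ((Ustar * R)ᵀ * U)ᵀ = (Ustar * R)ᵀ * U)
    (hpsd : ((Ustar * R)ᵀ * U).PosSemidef) :
    frob (U * Uᵀ - Ustar * Ustarᵀ) ^ 2 ≥
      2 * (Real.sqrt 2 - 1) * nthLargestEig (Ustar * Ustarᵀ) r *
        frob (U - Ustar * R) ^ 2 := by
  have hs2 : (1 : ℝ) ≤ Real.sqrt 2 := by
    nlinarith [Real.sqrt_nonneg 2, Real.sq_sqrt (show (0:ℝ) ≤ 2 by norm_num)]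
  set σ := nthLargestEig (Ustar * Ustarᵀ) r with hσdef
  rcases le_or_gt σ 0 with hσ0 | hσpos
  · have h1 : (0:ℝ) ≤ frob (U * Uᵀ - Ustar * Ustarᵀ) ^ 2 := sq_nonneg _
    have h2 : (0:ℝ) ≤ frob (U - Ustar * R) ^ 2 := sq_nonneg _
    have h3 : (0:ℝ) ≤ 2 * (Real.sqrt 2 - 1) := by linarith
    nlinarith [mul_nonneg h3 h2]
  have hrn : r ≤ n := by
    by_contra hrn
    have : σ = 0 := by
      rw [hσdef, nthLargestEig, dif_neg]
      rintro ⟨_, _, h⟩; omega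
    linarith
  -- notation
  set Q : Matrix (Fin n) (Fin r) ℝ := Ustar * R with hQ
  have hRR : R * Rᵀ = 1 := mul_eq_one_comm.mp hR
  have hQQ : Q * Qᵀ = Ustar * Ustarᵀ := by
    rw [hQ, Matrix.transpose_mul, Matrix.mul_assoc, ← Matrix.mul_assoc R, hRR, Matrix.one_mul]
  have hBA : Uᵀ * Q = Qᵀ * U := by
    rw [← hsym, Matrix.transpose_mul, Matrix.transpose_transpose]
  set P : Matrix (Fin r) (Fin r) ℝ := Qᵀ * U with hP
  set G : Matrix (Fin r) (Fin r) ℝ := Uᵀ * U with hG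
  set B : Matrix (Fin r) (Fin r) ℝ := Qᵀ * Q with hB
  have hPsym : Pᵀ = P := hsym
  have hGsym : Gᵀ = G := by rw [hG, Matrix.transpose_mul, Matrix.transpose_transpose]
  have hBsym : Bᵀ = B := by rw [hB, Matrix.transpose_mul, Matrix.transpose_transpose]
  set C : Matrix (Fin r) (Fin r) ℝ := P + P - G with hC
  have hCsym : Cᵀ = C := by
    rw [hC, Matrix.transpose_sub, Matrix.transpose_add, hPsym, hGsym]
  have hCher : C.IsHermitian := realHerm hCsym
  -- σ-lower-bound on B
  have hBpsd0 : (Ustarᵀ * Ustar - σ • 1).PosSemidef := eigA hr hrn Ustar hσpos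
  have hBpsd : (B - σ • (1 : Matrix (Fin r) (Fin r) ℝ)).PosSemidef := by
    have h := hBpsd0.conjTranspose_mul_mul_same R
    have heq : Rᴴ * (Ustarᵀ * Ustar - σ • 1) * R = B - σ • 1 := by
      rw [Matrix.conjTranspose_eq_transpose_of_trivial]
      rw [Matrix.mul_sub, Matrix.sub_mul, Matrix.mul_smul, Matrix.mul_one, Matrix.smul_mul, hR,
        hB, hQ, Matrix.transpose_mul]
      simp only [Matrix.mul_assoc]
    rwa [heq] at h
  -- spectral decomposition of C
  set V : Matrix (Fin r) (Fin r) ℝ := (hCher.eigenvectorUnitary : Matrix (Fin r) (Fin r) ℝ) with hV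
  set p : Fin r → ℝ := hCher.eigenvalues with hp
  have hV1 : star V * V = 1 := by
    rw [hV]; exact Matrix.mem_unitaryGroup_iff'.mp hCher.eigenvectorUnitary.2
  have hV2 : V * star V = 1 := by
    rw [hV]; exact Matrix.mem_unitaryGroup_iff.mp hCher.eigenvectorUnitary.2
  have hVt : star V = Vᵀ := by
    rw [Matrix.star_eq_conjTranspose, Matrix.conjTranspose_eq_transpose_of_trivial]
  have hCspec : star V * C * V = Matrix.diagonal p := by
    conv_lhs => rw [hCher.spectral_theorem, Unitary.conjStarAlgAut_apply]
    simp only [Matrix.mul_assoc]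
    rw [hV1, Matrix.mul_one, ← Matrix.mul_assoc, hV1, Matrix.one_mul]
    simp [RCLike.ofReal_real_eq_id, hp]
  have tc : ∀ X : Matrix (Fin r) (Fin r) ℝ, (star V * X * V).trace = X.trace := by
    intro X
    rw [Matrix.trace_mul_cycle, hV2, Matrix.one_mul]
  have tcm : ∀ X Y : Matrix (Fin r) (Fin r) ℝ,
      ((star V * X * V) * (star V * Y * V)).trace = (X * Y).trace := by
    intro X Y
    have h1 : (star V * X * V) * (star V * Y * V) = star V * (X * ((V * star V) * Y)) * V := by
      simp only [Matrix.mul_assoc]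
    rw [h1, hV2, Matrix.one_mul]
    exact tc (X * Y)
  set B' : Matrix (Fin r) (Fin r) ℝ := star V * B * V with hB'
  set T' : Matrix (Fin r) (Fin r) ℝ := star V * P * V with hT'
  have hB'sym : B'ᵀ = B' := by
    rw [hB', hVt]
    simp only [Matrix.transpose_mul, Matrix.transpose_transpose, hBsym]
    simp only [Matrix.mul_assoc]
  have hT'sym : T'ᵀ = T' := by
    rw [hT', hVt]
    simp only [Matrix.transpose_mul, Matrix.transpose_transpose, hPsym]
    simp only [Matrix.mul_assoc]
  -- diagonal entry facts
  have hB'diag : ∀ i, σ ≤ B' i i := by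
    intro i
    have h := hBpsd.conjTranspose_mul_mul_same V
    have heq : Vᴴ * (B - σ • 1) * V = B' - σ • 1 := by
      rw [Matrix.conjTranspose_eq_transpose_of_trivial, ← hVt]
      rw [Matrix.mul_sub, Matrix.sub_mul, Matrix.mul_smul, Matrix.mul_one, Matrix.smul_mul, hV1,
        hB']
    rw [heq] at h
    have := psd_diag h i
    simp only [Matrix.sub_apply, Matrix.smul_apply, Matrix.one_apply_eq, smul_eq_mul,
      mul_one] at this
    linarith
  have hEpsd : ((U - Q)ᵀ * (U - Q)).PosSemidef := by
    have := Matrix.posSemidef_conjTranspose_mul_self (U - Q)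
    rwa [Matrix.conjTranspose_eq_transpose_of_trivial] at this
  have hEBC : (U - Q)ᵀ * (U - Q) = B - C := by
    rw [Matrix.transpose_sub, Matrix.sub_mul, Matrix.mul_sub, Matrix.mul_sub, hBA, hC, hB, hG, hP]
    abel
  have hE'diag : ∀ i, p i ≤ B' i i := by
    intro i
    have h := hEpsd.conjTranspose_mul_mul_same V
    have heq : Vᴴ * ((U - Q)ᵀ * (U - Q)) * V = B' - Matrix.diagonal p := by
      rw [Matrix.conjTranspose_eq_transpose_of_trivial, ← hVt, hEBC, Matrix.mul_sub,
        Matrix.sub_mul, hB', hCspec]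
    rw [heq] at h
    have := psd_diag h i
    simp only [Matrix.sub_apply, Matrix.diagonal_apply_eq] at this
    linarith
  have hT'diag : ∀ i, 0 ≤ T' i i := by
    intro i
    have h := hpsd.conjTranspose_mul_mul_same V
    have heq : Vᴴ * ((Ustar * R)ᵀ * U) * V = T' := by
      rw [Matrix.conjTranspose_eq_transpose_of_trivial, ← hVt]
    rw [heq] at h
    exact psd_diag h i
  -- trace computations
  have htCC : (C * C).trace = ∑ i, (p i) ^ 2 := by
    rw [← tcm C C, hCspec, Matrix.diagonal_mul_diagonal, Matrix.trace_diagonal]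
    exact Finset.sum_congr rfl fun i _ => (sq (p i)).symm ▸ by ring
  have htBB : (B * B).trace = (B' * B').trace := (tcm B B).symm
  have htTT : (P * P).trace = (T' * T').trace := (tcm P P).symm
  have htTC : (P * C).trace = ∑ i, T' i i * p i := by
    rw [← tcm P C, hCspec]
    simp [Matrix.trace, Matrix.diag, Matrix.mul_diagonal]
    rfl
  have htE : frob (U - Q) ^ 2 = ∑ i, (B' i i - p i) := by
    rw [frob_sq_eq_trace, hEBC, ← tc (B - C), Matrix.mul_sub, Matrix.sub_mul, hCspec, ← hB']
    simp [Matrix.trace, Matrix.diag, Matrix.sub_apply, Matrix.diagonal_apply_eq]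
  -- main identity
  have hmain : frob (U * Uᵀ - Q * Qᵀ) ^ 2 =
      (C * C).trace + (B * B).trace + 2 * (P * P).trace - 4 * (P * C).trace := by
    have := traceId U Q hBA
    rw [this, hC, hP, hB, hG]
  -- put it together
  rw [ge_iff_le, ← hQQ, htE, hmain, htCC, htBB, htTT, htTC]
  have hstep : ∀ i : Fin r, 2 * (Real.sqrt 2 - 1) * σ * (B' i i - p i) ≤
      (B' i i) ^ 2 + (p i) ^ 2 + 2 * (T' i i) ^ 2 - 4 * (T' i i) * (p i) :=
    fun i => scalar_key σ (B' i i) (p i) (T' i i) (le_of_lt hσpos) (hB'diag i) (hE'diag i)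
      (hT'diag i)
  have hsum2 : 2 * (Real.sqrt 2 - 1) * σ * ∑ i, (B' i i - p i) ≤
      (∑ i, (B' i i) ^ 2) + (∑ i, (p i) ^ 2) + 2 * (∑ i, (T' i i) ^ 2)
        - 4 * (∑ i, T' i i * p i) := by
    rw [Finset.mul_sum]
    calc ∑ i, 2 * (Real.sqrt 2 - 1) * σ * (B' i i - p i)
        ≤ ∑ i, ((B' i i) ^ 2 + (p i) ^ 2 + 2 * (T' i i) ^ 2 - 4 * (T' i i) * (p i)) :=
          Finset.sum_le_sum (fun i _ => hstep i)
      _ = (∑ i, (B' i i) ^ 2) + (∑ i, (p i) ^ 2) + 2 * (∑ i, (T' i i) ^ 2)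
            - 4 * (∑ i, T' i i * p i) := by
          rw [Finset.mul_sum, Finset.mul_sum, ← Finset.sum_add_distrib,
            ← Finset.sum_add_distrib, ← Finset.sum_sub_distrib]
          exact Finset.sum_congr rfl fun i _ => by ring
  have hB'tr := sq_trace_ge hB'sym
  have hT'tr := sq_trace_ge hT'sym
  linarith
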